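/- arXiv:2410.16479 — 3 statements merged into one kernel-verified Lean document; each statement's English description precedes it below -/
import Mathlib

section
/- S_R(ω) can be rewritten as S_R(ω) = (√(2Γ))⁻¹ · (Γ² + [M,Γ] − M² − ω²I) · Inv(ω) · √(2Γ), where [M,Γ] = MΓ−ΓM and Inv(ω) = (ω²I+(Γ−M)²)⁻¹. -/
open Matrix

/-- Entrywise positive square root of the diagonal matrix `2Γ`, as a complex matrix. -/
noncomputable def sqrtTwoGamma (n : ℕ) (γ : Fin n → ℝ) : Matrix (Fin n) (Fin n) ℂ :=
  Matrix.diagonal (fun i => (Real.sqrt (2 * γ i) : ℂ))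

theorem stmt3 (N : ℕ) (γ : Fin (2*N) → ℝ) (hγ : ∀ i, 0 < γ i)
    (M : Matrix (Fin (2*N)) (Fin (2*N)) ℝ) (ω : ℝ)
    (h1 : IsUnit ((Complex.I * ω) • (1 : Matrix (Fin (2*N)) (Fin (2*N)) ℂ)
            + (Matrix.diagonal γ - M).map Complex.ofReal))
    (h2 : IsUnit ((Complex.I * (-ω : ℝ)) • (1 : Matrix (Fin (2*N)) (Fin (2*N)) ℂ)
            + (Matrix.diagonal γ - M).map Complex.ofReal))
    (Inv SR : Matrix (Fin (2*N)) (Fin (2*N)) ℂ)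
    (hInv : Inv = ((ω^2 : ℂ) • (1 : Matrix (Fin (2*N)) (Fin (2*N)) ℂ)
            + ((Matrix.diagonal γ - M).map Complex.ofReal)^2)⁻¹)
    (hSR : SR = sqrtTwoGamma (2*N) γ * ((Matrix.diagonal γ - M).map Complex.ofReal * Inv)
            * sqrtTwoGamma (2*N) γ - 1) :
    SR = (sqrtTwoGamma (2*N) γ)⁻¹
        * ((((Matrix.diagonal γ).map Complex.ofReal)^2
            + ((M.map Complex.ofReal) * ((Matrix.diagonal γ).map Complex.ofReal)
              - ((Matrix.diagonal γ).map Complex.ofReal) * (M.map Complex.ofReal))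
            - (M.map Complex.ofReal)^2
            - (ω^2 : ℂ) • (1 : Matrix (Fin (2*N)) (Fin (2*N)) ℂ)) * Inv)
        * sqrtTwoGamma (2*N) γ := by
  set s := sqrtTwoGamma (2*N) γ with hs
  set B := (Matrix.diagonal γ - M).map Complex.ofReal with hB
  set D := (Matrix.diagonal γ).map Complex.ofReal with hD
  set m := M.map Complex.ofReal with hm
  set A := (ω^2 : ℂ) • (1 : Matrix (Fin (2*N)) (Fin (2*N)) ℂ) + B^2 with hA
  have hBdm : B = D - m := by
    rw [hB, hD, hm]
    ext i j
    by_cases hij : i = j <;> simp [Matrix.map_apply, Matrix.sub_apply, Matrix.diagonal_apply, hij]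
  -- A is a unit
  have expand : ∀ c d : ℂ, (c • (1 : Matrix (Fin (2*N)) (Fin (2*N)) ℂ) + B) * (d • 1 + B)
      = (c*d) • 1 + (c+d) • B + B^2 := by
    intro c d
    simp only [add_mul, mul_add, smul_mul_assoc, Matrix.mul_smul, one_mul, mul_one,
      smul_smul, pow_two, add_smul]
    abel
  have hAunit : IsUnit A := by
    have h := h1.mul h2
    rw [expand] at h
    have : (Complex.I * ↑ω) * (Complex.I * ↑(-ω : ℝ)) = (ω^2 : ℂ) := by
      push_cast
      rw [show Complex.I * ↑ω * (Complex.I * -↑ω) = -(Complex.I^2 * (↑ω*↑ω)) from by ring,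
        Complex.I_sq]
      ring
    rw [this] at h
    have h0 : (Complex.I * ↑ω) + (Complex.I * ↑(-ω : ℝ)) = 0 := by push_cast; ring
    rw [h0, zero_smul, add_zero] at h
    exact h
  have hAdet : IsUnit A.det := (Matrix.isUnit_iff_isUnit_det A).mp hAunit
  have hAInv : A * Inv = 1 := by rw [hInv]; exact Matrix.mul_nonsing_inv A hAdet
  -- s facts
  have hsdet : IsUnit s.det := by
    rw [hs, sqrtTwoGamma, Matrix.det_diagonal]
    refine isUnit_iff_ne_zero.mpr (Finset.prod_ne_zero_iff.mpr fun i _ => ?_)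
    exact Complex.ofReal_ne_zero.mpr (Real.sqrt_ne_zero'.mpr (by linarith [hγ i]))
  have hs1 : s⁻¹ * s = 1 := Matrix.nonsing_inv_mul s hsdet
  have hss : s * s = (2:ℂ) • D := by
    rw [hs, sqrtTwoGamma, Matrix.diagonal_mul_diagonal, hD]
    ext i j
    rcases eq_or_ne i j with rfl | hij
    · simp only [Matrix.diagonal_apply_eq, Matrix.smul_apply, Matrix.map_apply]
      rw [← Complex.ofReal_mul, Real.mul_self_sqrt (by linarith [hγ i]), smul_eq_mul]
      push_cast; ring
    · simp [Matrix.diagonal_apply_ne _ hij, Matrix.map_apply]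
  have hC : s*s*B - A = D^2 + (m*D - D*m) - m^2 - (ω^2 : ℂ) • 1 := by
    rw [hss, hBdm, hA, hBdm]
    simp only [pow_two, mul_sub, sub_mul, two_smul, add_mul, smul_sub, smul_add]
    abel
  rw [hSR, ← hC, sub_mul, Matrix.mul_sub, Matrix.sub_mul, hAInv, mul_one]
  have key : s⁻¹ * (s*s*B*Inv) * s = s * (B * Inv) * s := by
    simp only [← mul_assoc]
    rw [hs1, one_mul]
  rw [← key]
  simp only [← mul_assoc]
  rw [hs1]
end

section
/- With A(ω) := Γ² + [M,Γ] − M² − ω²I and B(ω) := Inv(ω)ΓInv(ω)ᵀ, the difference S_R(ω)S_I(ω)ᵀ − S_I(ω)S_R(ω)ᵀ equals −4ω·(√(2Γ))⁻¹·(A(ω)B(ω)Γ − ΓB(ω)A(ω)ᵀ)·(√(2Γ))⁻¹. In particular, S_R(ω)S_I(ω)ᵀ is symmetric if and only if A(ω)B(ω)Γ = ΓB(ω)A(ω)ᵀ. -/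
open Matrix

theorem stmt5 (N : ℕ) (γ : Fin (2*N) → ℝ) (hγ : ∀ i, 0 < γ i)
    (M : Matrix (Fin (2*N)) (Fin (2*N)) ℝ) (ω : ℝ) (hω : ω ≠ 0)
    (h1 : IsUnit ((Complex.I * ω) • (1 : Matrix (Fin (2*N)) (Fin (2*N)) ℂ)
            + (Matrix.diagonal γ - M).map Complex.ofReal))
    (h2 : IsUnit ((Complex.I * (-ω : ℝ)) • (1 : Matrix (Fin (2*N)) (Fin (2*N)) ℂ)
            + (Matrix.diagonal γ - M).map Complex.ofReal))
    (hInvUnit : IsUnit ((ω^2) • (1 : Matrix (Fin (2*N)) (Fin (2*N)) ℝ) + (Matrix.diagonal γ - M)^2))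
    (Inv A B sq2 SR SI : Matrix (Fin (2*N)) (Fin (2*N)) ℝ)
    (hInv : Inv = ((ω^2) • (1 : Matrix (Fin (2*N)) (Fin (2*N)) ℝ) + (Matrix.diagonal γ - M)^2)⁻¹)
    (hA : A = (Matrix.diagonal γ)^2
            + (M * Matrix.diagonal γ - Matrix.diagonal γ * M)
            - M^2 - (ω^2) • (1 : Matrix (Fin (2*N)) (Fin (2*N)) ℝ))
    (hB : B = Inv * Matrix.diagonal γ * Invᵀ)
    (hsq2 : sq2 = Matrix.diagonal (fun i => Real.sqrt (2 * γ i)))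
    (hSR : SR = sq2⁻¹ * (A * Inv) * sq2)
    (hSI : SI = (-ω) • (sq2 * Inv * sq2)) :
    SR * SIᵀ - SI * SRᵀ
      = (-(4*ω)) • (sq2⁻¹ * (A * B * Matrix.diagonal γ - Matrix.diagonal γ * B * Aᵀ) * sq2⁻¹)
    ∧ ((SR * SIᵀ)ᵀ = SR * SIᵀ ↔ A * B * Matrix.diagonal γ = Matrix.diagonal γ * B * Aᵀ) := by
  set D : Matrix (Fin (2*N)) (Fin (2*N)) ℝ := Matrix.diagonal γ with hD
  have h2γ : ∀ i, (0:ℝ) < 2 * γ i := fun i => by have := hγ i; linarith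
  have hssq : sq2 * sq2 = (2:ℝ) • D := by
    rw [hsq2, Matrix.diagonal_mul_diagonal, hD,
      show (fun i => Real.sqrt (2 * γ i) * Real.sqrt (2 * γ i)) = (2:ℝ) • γ from
        funext fun i => by rw [Real.mul_self_sqrt (h2γ i).le]; rfl,
      Matrix.diagonal_smul]
  have hdet : IsUnit sq2.det := by
    rw [hsq2, Matrix.det_diagonal]
    exact isUnit_iff_ne_zero.mpr
      (Finset.prod_pos fun i _ => Real.sqrt_pos.mpr (h2γ i)).ne'
  have hst : sq2 * sq2⁻¹ = 1 := Matrix.mul_nonsing_inv _ hdet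
  have hts : sq2⁻¹ * sq2 = 1 := Matrix.nonsing_inv_mul _ hdet
  have hsT : sq2ᵀ = sq2 := by rw [hsq2, Matrix.diagonal_transpose]
  have htT : (sq2⁻¹)ᵀ = sq2⁻¹ := by rw [Matrix.transpose_nonsing_inv, hsT]
  have hs : sq2 = (2:ℝ) • (D * sq2⁻¹) := by
    rw [← Matrix.smul_mul, ← hssq, Matrix.mul_assoc, hst, Matrix.mul_one]
  have hs2 : sq2 = (2:ℝ) • (sq2⁻¹ * D) := by
    rw [← Matrix.mul_smul, ← hssq, ← Matrix.mul_assoc, hts, Matrix.one_mul]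
  have hmuls : ∀ X : Matrix (Fin (2*N)) (Fin (2*N)) ℝ,
      X * sq2 = (2:ℝ) • (X * (D * sq2⁻¹)) := by
    intro X
    nth_rewrite 1 [hs]
    rw [Matrix.mul_smul]
  have hsmul : ∀ X : Matrix (Fin (2*N)) (Fin (2*N)) ℝ,
      sq2 * X = (2:ℝ) • (sq2⁻¹ * (D * X)) := by
    intro X
    nth_rewrite 1 [hs2]
    rw [Matrix.smul_mul, Matrix.mul_assoc]
  have hkey : ∀ X : Matrix (Fin (2*N)) (Fin (2*N)) ℝ,
      sq2 * (sq2 * X) = (2:ℝ) • (D * X) := by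
    intro X
    rw [← Matrix.mul_assoc, hssq, Matrix.smul_mul]
  have E1 : SR * SIᵀ = (-(4*ω)) • (sq2⁻¹ * (A * B * D) * sq2⁻¹) := by
    rw [hSR, hSI, hB]
    simp only [Matrix.transpose_smul, Matrix.transpose_mul, hsT]
    simp only [Matrix.mul_smul, Matrix.smul_mul, smul_smul, Matrix.mul_assoc]
    rw [hkey, hmuls Invᵀ]
    simp only [Matrix.mul_smul, Matrix.smul_mul, smul_smul, Matrix.mul_assoc]
    congr 1
    ring
  have E2 : SI * SRᵀ = (-(4*ω)) • (sq2⁻¹ * (D * B * Aᵀ) * sq2⁻¹) := by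
    rw [hSR, hSI, hB]
    simp only [Matrix.transpose_smul, Matrix.transpose_mul, hsT, htT]
    simp only [Matrix.mul_smul, Matrix.smul_mul, smul_smul, Matrix.mul_assoc]
    rw [hkey, hsmul]
    simp only [Matrix.mul_smul, Matrix.smul_mul, smul_smul, Matrix.mul_assoc]
    congr 1
    ring
  have hmain : SR * SIᵀ - SI * SRᵀ
      = (-(4*ω)) • (sq2⁻¹ * (A * B * D - D * B * Aᵀ) * sq2⁻¹) := by
    rw [E1, E2, ← smul_sub, ← Matrix.sub_mul, ← Matrix.mul_sub]
  have hX0 : ∀ X : Matrix (Fin (2*N)) (Fin (2*N)) ℝ,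
      sq2⁻¹ * X * sq2⁻¹ = 0 → X = 0 := by
    intro X h
    have h' : sq2 * (sq2⁻¹ * X * sq2⁻¹) * sq2 = 0 := by rw [h]; simp
    calc X = sq2 * (sq2⁻¹ * X * sq2⁻¹) * sq2 := by
            rw [Matrix.mul_assoc sq2, Matrix.mul_assoc (sq2⁻¹ * X), hts, Matrix.mul_one,
              ← Matrix.mul_assoc, hst, Matrix.one_mul]
      _ = 0 := h'
  have hTT : (SR * SIᵀ)ᵀ = SI * SRᵀ := by
    rw [Matrix.transpose_mul, Matrix.transpose_transpose]
  refine ⟨hmain, ?_⟩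
  constructor
  · intro h
    have hd : SR * SIᵀ - SI * SRᵀ = 0 := by rw [← hTT, h, sub_self]
    rw [hmain] at hd
    have h4 : (-(4*ω)) ≠ 0 := by
      simp only [ne_eq, neg_eq_zero, mul_eq_zero, not_or]
      exact ⟨by norm_num, hω⟩
    have h5 := (smul_eq_zero.mp hd).resolve_left h4
    exact sub_eq_zero.mp (hX0 _ h5)
  · intro h
    have h0 : A * B * D - D * B * Aᵀ = 0 := sub_eq_zero.mpr h
    have hd : SR * SIᵀ - SI * SRᵀ = 0 := by rw [hmain, h0]; simp
    rw [hTT]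
    exact (sub_eq_zero.mp hd).symm
end

section
/- If F = 0 (no pair production) and G is Hermitian, then the transfer function S(ω) = √(2Γ)(iωI + Γ − 𝓜)⁻¹√(2Γ) − I satisfies S(ω)S(−ω)ᵀ = I whenever Γ is proportional to the identity; consequently the spectral covariance σ_out(ω) = (1/(2√(2π)))S(ω)S(−ω)ᵀ is real (proportional to the identity). -/
set_option maxHeartbeats 1000000


open Matrix

theorem stmt16 (N : ℕ) (G : Matrix (Fin N) (Fin N) ℂ) (hG : Gᴴ = G)
    (𝓜 : Matrix (Fin N ⊕ Fin N) (Fin N ⊕ Fin N) ℝ)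
    (h𝓜 : 𝓜 = Matrix.fromBlocks (G.map Complex.im) (G.map Complex.re)
            (-(G.map Complex.re)) (-((G.map Complex.im)ᵀ)))
    (γ ω : ℝ) (hγ : 0 < γ)
    (S : ℝ → Matrix (Fin N ⊕ Fin N) (Fin N ⊕ Fin N) ℂ)
    (hS : ∀ w : ℝ, S w =
      ((Real.sqrt (2*γ) : ℂ) • (1 : Matrix (Fin N ⊕ Fin N) (Fin N ⊕ Fin N) ℂ))
        * ((Complex.I * w) • (1 : Matrix (Fin N ⊕ Fin N) (Fin N ⊕ Fin N) ℂ)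
            + ((γ • (1 : Matrix (Fin N ⊕ Fin N) (Fin N ⊕ Fin N) ℝ) - 𝓜).map Complex.ofReal))⁻¹
        * ((Real.sqrt (2*γ) : ℂ) • (1 : Matrix (Fin N ⊕ Fin N) (Fin N ⊕ Fin N) ℂ)) - 1)
    (h1 : IsUnit ((Complex.I * ω) • (1 : Matrix (Fin N ⊕ Fin N) (Fin N ⊕ Fin N) ℂ)
            + ((γ • (1 : Matrix (Fin N ⊕ Fin N) (Fin N ⊕ Fin N) ℝ) - 𝓜).map Complex.ofReal)))
    (h2 : IsUnit ((Complex.I * (-ω : ℝ)) • (1 : Matrix (Fin N ⊕ Fin N) (Fin N ⊕ Fin N) ℂ)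
            + ((γ • (1 : Matrix (Fin N ⊕ Fin N) (Fin N ⊕ Fin N) ℝ) - 𝓜).map Complex.ofReal))) :
    S ω * (S (-ω))ᵀ = 1
    ∧ (1 / (2 * Real.sqrt (2 * Real.pi)) : ℂ) • (S ω * (S (-ω))ᵀ)
      = (1 / (2 * Real.sqrt (2 * Real.pi)) : ℂ)
          • (1 : Matrix (Fin N ⊕ Fin N) (Fin N ⊕ Fin N) ℂ) := by
  classical
  have hre' : ∀ i j, (G i j).re = (G j i).re := by
    intro i j
    have h := congrFun (congrFun hG j) i
    simp only [Matrix.conjTranspose_apply] at h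
    rw [← h]; simp [Complex.conj_re]
  have him' : ∀ i j, (G i j).im = -(G j i).im := by
    intro i j
    have h := congrFun (congrFun hG j) i
    simp only [Matrix.conjTranspose_apply] at h
    rw [← h]; simp [Complex.conj_im]
  set M0 : Matrix (Fin N ⊕ Fin N) (Fin N ⊕ Fin N) ℂ :=
    ((γ • (1 : Matrix (Fin N ⊕ Fin N) (Fin N ⊕ Fin N) ℝ) - 𝓜).map Complex.ofReal) with hM0
  set B : Matrix (Fin N ⊕ Fin N) (Fin N ⊕ Fin N) ℂ :=
    (Complex.I * ω) • (1 : Matrix (Fin N ⊕ Fin N) (Fin N ⊕ Fin N) ℂ) + M0 with hBdef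
  set A : Matrix (Fin N ⊕ Fin N) (Fin N ⊕ Fin N) ℂ :=
    (Complex.I * ((-ω : ℝ) : ℂ)) • (1 : Matrix (Fin N ⊕ Fin N) (Fin N ⊕ Fin N) ℂ) + M0 with hAdef
  set C : Matrix (Fin N ⊕ Fin N) (Fin N ⊕ Fin N) ℂ := Aᵀ with hCdef
  -- antisymmetry of 𝓜
  have hRe : (G.map Complex.re)ᵀ = G.map Complex.re := by
    ext i j
    have h := congrFun (congrFun hG j) i
    simp only [Matrix.conjTranspose_apply] at h
    simp only [Matrix.transpose_apply, Matrix.map_apply]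
    rw [← h]
    simp [Complex.conj_re]
  have hIm : (G.map Complex.im)ᵀ = -(G.map Complex.im) := by
    ext i j
    have h := congrFun (congrFun hG j) i
    simp only [Matrix.conjTranspose_apply] at h
    simp only [Matrix.transpose_apply, Matrix.map_apply, Matrix.neg_apply]
    rw [← h]
    simp [Complex.conj_im]
  have hanti : 𝓜ᵀ = -𝓜 := by
    rw [h𝓜]
    ext i j
    cases i <;> cases j <;>
      simp only [Matrix.transpose_apply, Matrix.fromBlocks_apply₁₁,
        Matrix.fromBlocks_apply₁₂, Matrix.fromBlocks_apply₂₁, Matrix.fromBlocks_apply₂₂,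
        Matrix.neg_apply, Matrix.map_apply] <;>
      first
        | exact him' _ _
        | exact congrArg Neg.neg (hre' _ _)
        | (rw [hre' _ _]; try ring)
        | (rw [him' _ _]; try exact neg_neg _)
        | ring
  -- B + C = 2γ • 1
  have hBC : B + C = ((2 * γ : ℝ) : ℂ) • 1 := by
    rw [hBdef, hCdef, hAdef, Matrix.transpose_add, Matrix.transpose_smul,
      Matrix.transpose_one]
    have hM0t : M0ᵀ = ((γ • (1 : Matrix (Fin N ⊕ Fin N) (Fin N ⊕ Fin N) ℝ) + 𝓜).map Complex.ofReal) := by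
      rw [hM0, ← Matrix.transpose_map]
      congr 1
      rw [Matrix.transpose_sub, Matrix.transpose_smul, Matrix.transpose_one, hanti,
        sub_neg_eq_add]
    rw [hM0t, hM0]
    ext i j
    push_cast
    simp only [Matrix.add_apply, Matrix.smul_apply, Matrix.map_apply, Matrix.sub_apply,
      Matrix.one_apply, Matrix.smul_apply]
    by_cases h : i = j <;> simp [h] <;> push_cast <;> ring
  have hdetB : IsUnit B.det := (Matrix.isUnit_iff_isUnit_det B).mp h1
  have hdetA : IsUnit A.det := (Matrix.isUnit_iff_isUnit_det A).mp h2
  have hdetC : IsUnit C.det := by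
    rw [hCdef, Matrix.det_transpose]; exact hdetA
  have hBinv : B⁻¹ * B = 1 := Matrix.nonsing_inv_mul B hdetB
  have hCinv : C * C⁻¹ = 1 := Matrix.mul_nonsing_inv C hdetC
  -- key resolvent identity
  have hkey : B⁻¹ + C⁻¹ = ((2 * γ : ℝ) : ℂ) • (B⁻¹ * C⁻¹) := by
    have : B⁻¹ * (B + C) * C⁻¹ = C⁻¹ + B⁻¹ := by
      rw [mul_add, add_mul, hBinv, one_mul, mul_assoc, hCinv, mul_one]
    rw [hBC] at this
    rw [show B⁻¹ + C⁻¹ = C⁻¹ + B⁻¹ from add_comm _ _, ← this,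
      Matrix.mul_smul, mul_one, Matrix.smul_mul]
  -- rewrite S
  have hsq : ((Real.sqrt (2*γ) : ℝ) : ℂ) * ((Real.sqrt (2*γ) : ℝ) : ℂ) = ((2 * γ : ℝ) : ℂ) := by
    rw [← Complex.ofReal_mul, Real.mul_self_sqrt (by positivity)]
  have hSω : S ω = ((2 * γ : ℝ) : ℂ) • B⁻¹ - 1 := by
    rw [hS ω]
    rw [Matrix.smul_mul, Matrix.smul_mul, one_mul, Matrix.mul_smul, mul_one,
      smul_smul, hsq]
  have hSmω : (S (-ω))ᵀ = ((2 * γ : ℝ) : ℂ) • C⁻¹ - 1 := by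
    rw [hS (-ω), ← hAdef]
    rw [Matrix.smul_mul, Matrix.smul_mul, one_mul, Matrix.mul_smul, mul_one,
      smul_smul, hsq, Matrix.transpose_sub, Matrix.transpose_smul, Matrix.transpose_one,
      Matrix.transpose_nonsing_inv, ← hCdef]
  set a : ℂ := ((2 * γ : ℝ) : ℂ) with ha
  have hmain : S ω * (S (-ω))ᵀ = 1 := by
    rw [hSω, hSmω]
    have expand : (a • B⁻¹ - 1) * (a • C⁻¹ - 1)
        = a • (a • (B⁻¹ * C⁻¹)) - a • (B⁻¹ + C⁻¹) + 1 := by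
      rw [sub_mul, mul_sub, mul_sub, one_mul, mul_one, one_mul, Matrix.smul_mul,
        Matrix.mul_smul, smul_add]
      abel
    rw [expand, hkey, smul_smul]
    abel
  exact ⟨hmain, by rw [hmain]⟩
end
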